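/- Let A, B, C, D be non-negative real numbers such that √A > √B + √C + √D. Then there exist positive real numbers β, γ, δ such that A > (1 + β + 1/γ)·B + (1 + γ + 1/δ)·C + (1 + δ + 1/β)·D. -/

import Mathlib

theorem stmt_2 (A B C D : ℝ) (hA : 0 ≤ A) (hB : 0 ≤ B) (hC : 0 ≤ C) (hD : 0 ≤ D)
    (h : Real.sqrt B + Real.sqrt C + Real.sqrt D < Real.sqrt A) :
    ∃ β γ δ : ℝ, 0 < β ∧ 0 < γ ∧ 0 < δ ∧
      (1 + β + 1/γ) * B + (1 + γ + 1/δ) * C + (1 + δ + 1/β) * D < A := by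
  set b := Real.sqrt B with hb'
  set c := Real.sqrt C with hc'
  set d := Real.sqrt D with hd'
  have hb : 0 ≤ b := Real.sqrt_nonneg B
  have hc : 0 ≤ c := Real.sqrt_nonneg C
  have hd : 0 ≤ d := Real.sqrt_nonneg D
  have hB2 : b * b = B := Real.mul_self_sqrt hB
  have hC2 : c * c = C := Real.mul_self_sqrt hC
  have hD2 : d * d = D := Real.mul_self_sqrt hD
  have hA2 : Real.sqrt A * Real.sqrt A = A := Real.mul_self_sqrt hA
  set s := b + c + d with hs'
  have hs : 0 ≤ s := by positivity
  have hsA : s * s < A := by nlinarith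
  set e := (A - s * s) / (2 * (s + 1)) with he'
  have hsp : (0:ℝ) < 2 * (s + 1) := by linarith
  have he : 0 < e := div_pos (by linarith) hsp
  have he2 : 2 * e * (s + 1) = A - s * s := by
    field_simp [he']
    have := div_mul_cancel₀ (A - s * s) hsp.ne'
    rw [← he'] at this
    linear_combination this
  have hbe : 0 < b + e := by linarith
  have hce : 0 < c + e := by linarith
  have hde : 0 < d + e := by linarith
  have key : ∀ u v : ℝ, 0 ≤ u → 0 ≤ v → u * u * ((v + e) / (u + e)) ≤ u * (v + e) := by
    intro u v hu hv
    have h1 : u * u / (u + e) ≤ u := by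
      rw [div_le_iff₀ (by linarith)]
      nlinarith
    calc u * u * ((v + e) / (u + e)) = (u * u / (u + e)) * (v + e) := by ring
      _ ≤ u * (v + e) := mul_le_mul_of_nonneg_right h1 (by linarith)
  refine ⟨(d + e) / (b + e), (b + e) / (c + e), (c + e) / (d + e),
    div_pos hde hbe, div_pos hbe hce, div_pos hce hde, ?_⟩
  rw [one_div_div, one_div_div, one_div_div]
  have k1 := key b d hb hd
  have k2 := key b c hb hc
  have k3 := key c b hc hb
  have k4 := key c d hc hd
  have k5 := key d c hd hc
  have k6 := key d b hd hb
  rw [hB2] at k1 k2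
  rw [hC2] at k3 k4
  rw [hD2] at k5 k6
  have expand : (1 + (d + e) / (b + e) + (c + e) / (b + e)) * B
      + (1 + (b + e) / (c + e) + (d + e) / (c + e)) * C
      + (1 + (c + e) / (d + e) + (b + e) / (d + e)) * D
      ≤ B + C + D + b * (d + e) + b * (c + e) + c * (b + e) + c * (d + e)
        + d * (c + e) + d * (b + e) := by
    have e1 : B * ((d + e) / (b + e)) ≤ b * (d + e) := k1
    have e2 : B * ((c + e) / (b + e)) ≤ b * (c + e) := k2
    have e3 : C * ((b + e) / (c + e)) ≤ c * (b + e) := k3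
    have e4 : C * ((d + e) / (c + e)) ≤ c * (d + e) := k4
    have e5 : D * ((c + e) / (d + e)) ≤ d * (c + e) := k5
    have e6 : D * ((b + e) / (d + e)) ≤ d * (b + e) := k6
    have lhs_eq : (1 + (d + e) / (b + e) + (c + e) / (b + e)) * B
        + (1 + (b + e) / (c + e) + (d + e) / (c + e)) * C
        + (1 + (c + e) / (d + e) + (b + e) / (d + e)) * D
        = B + C + D + B * ((d + e) / (b + e)) + B * ((c + e) / (b + e))
          + C * ((b + e) / (c + e)) + C * ((d + e) / (c + e))
          + D * ((c + e) / (d + e)) + D * ((b + e) / (d + e)) := by ring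
    rw [lhs_eq]
    linarith [e1, e2, e3, e4, e5, e6]
  have final : B + C + D + b * (d + e) + b * (c + e) + c * (b + e) + c * (d + e)
      + d * (c + e) + d * (b + e) < A := by
    have sum_eq : B + C + D + b * (d + e) + b * (c + e) + c * (b + e) + c * (d + e)
        + d * (c + e) + d * (b + e) = s * s + 2 * e * s := by
      rw [← hB2, ← hC2, ← hD2, hs']; ring
    have h2 : 2 * e * s + 2 * e = A - s * s := by linear_combination he2
    linarith
  linarith
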